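/- Let γ ∈ ℂ, γ ≠ 0, define c_n = e^{−|γ|²/2}·γⁿ/√(n!), and let ψ_{n,m} = (c_n·[m=0] − [n=0]·c_m)/√(2(1 − e^{−|γ|²})) be the Fock coefficients of the normalized state |ψ⟩ = [2(1−e^{−|γ|²})]^{−1/2}(|γ⟩⊗|0⟩ − |0⟩⊗|γ⟩). Then the energy of |ψ⟩ satisfies Σ_{n,m≥0} (n+m)·|ψ_{n,m}|² = |γ|²/(1 − e^{−|γ|²}); moreover this quantity tends to 1 as γ → 0. -/

import Mathlib

/-- Fock-basis coefficients of the coherent state `|γ⟩`. -/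
noncomputable def cohCoeff (γ : ℂ) (n : ℕ) : ℂ :=
  (Real.exp (-(‖γ‖) ^ 2 / 2) : ℂ) * γ ^ n / (Real.sqrt n.factorial : ℂ)

/-- Fock-basis coefficients of the normalized state
`|ψ⟩ = [2(1 - e^{-|γ|²})]^{-1/2} (|γ⟩⊗|0⟩ - |0⟩⊗|γ⟩)`. -/
noncomputable def psiCoeff (γ : ℂ) (n m : ℕ) : ℂ :=
  (cohCoeff γ n * (if m = 0 then 1 else 0) - (if n = 0 then 1 else 0) * cohCoeff γ m) /
    (Real.sqrt (2 * (1 - Real.exp (-(‖γ‖) ^ 2))) : ℂ)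

open Filter Topology

lemma real_exp_tsum (A : ℝ) : Real.exp A = ∑' n : ℕ, A ^ n / n.factorial := by
  rw [Real.exp_eq_exp_ℝ, NormedSpace.exp_eq_tsum_div]

lemma shift_eq (A : ℝ) (n : ℕ) :
    ((n + 1 : ℕ) : ℝ) * A ^ (n + 1) / (n + 1).factorial = A * (A ^ n / n.factorial) := by
  rw [Nat.factorial_succ]
  push_cast
  have h1 : (n.factorial : ℝ) ≠ 0 := Nat.cast_ne_zero.2 n.factorial_ne_zero
  have h2 : ((n : ℝ) + 1) ≠ 0 := by positivity
  field_simp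
  ring

lemma summable_nmul (A : ℝ) : Summable (fun n : ℕ => (n : ℝ) * A ^ n / n.factorial) := by
  rw [← summable_nat_add_iff 1]
  have := (Real.summable_pow_div_factorial A).mul_left A
  exact this.congr fun n => (shift_eq A n).symm

lemma tsum_nmul (A : ℝ) :
    ∑' n : ℕ, (n : ℝ) * A ^ n / n.factorial = A * Real.exp A := by
  rw [(summable_nmul A).tsum_eq_zero_add]
  simp only [shift_eq A]
  rw [tsum_mul_left, ← real_exp_tsum]
  simp

lemma norm_cohCoeff_sq (γ : ℂ) (n : ℕ) :
    ‖cohCoeff γ n‖ ^ 2 =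
      Real.exp (-(‖γ‖) ^ 2) * ((‖γ‖) ^ 2) ^ n / n.factorial := by
  unfold cohCoeff
  have hfac : (0:ℝ) ≤ (n.factorial : ℝ) := Nat.cast_nonneg _
  rw [norm_div, norm_mul, Complex.norm_real, Complex.norm_real, norm_pow,
    Real.norm_eq_abs, Real.norm_eq_abs, abs_of_pos (Real.exp_pos _),
    abs_of_nonneg (Real.sqrt_nonneg _), div_pow, mul_pow, Real.sq_sqrt hfac]
  have e1 : Real.exp (-(‖γ‖) ^ 2 / 2) ^ 2 = Real.exp (-(‖γ‖) ^ 2) := by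
    rw [sq, ← Real.exp_add]; ring_nf
  rw [e1, ← pow_right_comm]

lemma pointwise_key (γ : ℂ) (hγ : γ ≠ 0) (n m : ℕ) :
    ((n + m : ℕ) : ℝ) * ‖psiCoeff γ n m‖ ^ 2 =
      ((n : ℝ) * ‖cohCoeff γ n‖ ^ 2 / (2 * (1 - Real.exp (-(‖γ‖) ^ 2)))) *
          (if m = 0 then 1 else 0) +
        (if n = 0 then 1 else 0) *
          ((m : ℝ) * ‖cohCoeff γ m‖ ^ 2 / (2 * (1 - Real.exp (-(‖γ‖) ^ 2)))) := by
  have hA : 0 < (‖γ‖) ^ 2 := pow_pos (norm_pos_iff.mpr hγ) 2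
  have hE1 : Real.exp (-(‖γ‖) ^ 2) < 1 := by
    have := Real.exp_lt_exp.2 (show -(‖γ‖) ^ 2 < 0 by linarith)
    simpa using this
  have hN : (0:ℝ) ≤ 2 * (1 - Real.exp (-(‖γ‖) ^ 2)) := by linarith
  have hnorm : ∀ x : ℂ,
      ‖x / ((Real.sqrt (2 * (1 - Real.exp (-(‖γ‖) ^ 2))) : ℝ) : ℂ)‖ ^ 2 =
        ‖x‖ ^ 2 / (2 * (1 - Real.exp (-(‖γ‖) ^ 2))) := by
    intro x
    rw [norm_div, Complex.norm_real, Real.norm_eq_abs,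
      abs_of_nonneg (Real.sqrt_nonneg _), div_pow, Real.sq_sqrt hN]
  unfold psiCoeff
  by_cases hn : n = 0 <;> by_cases hm : m = 0
  · subst hn; subst hm; simp
  · subst hn
    rw [if_neg hm, if_neg hm, if_pos rfl, if_pos rfl, mul_zero, zero_sub, one_mul, neg_div,
      norm_neg, hnorm]
    push_cast
    ring
  · subst hm
    rw [if_pos rfl, if_pos rfl, if_neg hn, if_neg hn, mul_one, zero_mul, sub_zero, hnorm]
    push_cast
    ring
  · simp [hn, hm, hnorm]

set_option maxHeartbeats 1000000 in
lemma tsum_cross {B : ℕ → ℝ} (hB : Summable B) (hBnn : ∀ n, 0 ≤ B n) :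
    ∑' p : ℕ × ℕ, (B p.1 * (if p.2 = 0 then 1 else 0) + (if p.1 = 0 then 1 else 0) * B p.2)
      = (∑' n, B n) + ∑' n, B n := by
  have hind : Summable (fun k : ℕ => if k = 0 then (1:ℝ) else 0) := (hasSum_ite_eq 0 1).summable
  have hindnn : ∀ k : ℕ, 0 ≤ (if k = 0 then (1:ℝ) else 0) := by
    intro k; split <;> norm_num
  have hT1 : Summable (fun p : ℕ × ℕ => B p.1 * (if p.2 = 0 then 1 else 0)) :=
    hB.mul_of_nonneg hind hBnn hindnn
  have hT2 : Summable (fun p : ℕ × ℕ => (if p.1 = 0 then 1 else 0) * B p.2) :=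
    hind.mul_of_nonneg hB hindnn hBnn
  rw [hT1.tsum_add hT2, ← hB.tsum_mul_tsum hind hT1, ← hind.tsum_mul_tsum hB hT2,
    tsum_ite_eq, mul_one, one_mul]

set_option maxHeartbeats 1000000 in
/-- The energy of `|ψ⟩ ∝ |γ⟩⊗|0⟩ - |0⟩⊗|γ⟩` equals `|γ|²/(1 - e^{-|γ|²})`, and this
quantity tends to `1` as `γ → 0`. -/
theorem energy_antisym_coherent (γ : ℂ) (hγ : γ ≠ 0) :
    (∑' p : ℕ × ℕ, ((p.1 + p.2 : ℕ) : ℝ) * ‖psiCoeff γ p.1 p.2‖ ^ 2 =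
        (‖γ‖) ^ 2 / (1 - Real.exp (-(‖γ‖) ^ 2))) ∧
    Filter.Tendsto
      (fun g : ℂ => (‖g‖) ^ 2 / (1 - Real.exp (-(‖g‖) ^ 2)))
      (nhdsWithin 0 {0}ᶜ) (nhds 1) := by
  constructor
  · have hA : 0 < (‖γ‖) ^ 2 := pow_pos (norm_pos_iff.mpr hγ) 2
    have hE1 : Real.exp (-(‖γ‖) ^ 2) < 1 := by
      have := Real.exp_lt_exp.2 (show -(‖γ‖) ^ 2 < 0 by linarith)
      simpa using this
    have hNpos : (0:ℝ) < 2 * (1 - Real.exp (-(‖γ‖) ^ 2)) := by linarith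
    set A : ℝ := (‖γ‖) ^ 2 with hAdef
    set N : ℝ := 2 * (1 - Real.exp (-A)) with hNdef
    have h1 : ∀ n : ℕ, (n : ℝ) * ‖cohCoeff γ n‖ ^ 2 / N =
        (Real.exp (-A) / N) * ((n : ℝ) * A ^ n / n.factorial) := by
      intro n
      rw [norm_cohCoeff_sq]
      ring
    have hBsum : Summable (fun n : ℕ => (n : ℝ) * ‖cohCoeff γ n‖ ^ 2 / N) :=
      ((summable_nmul A).mul_left (Real.exp (-A) / N)).congr fun n => (h1 n).symm
    have hBnn : ∀ n : ℕ, 0 ≤ (n : ℝ) * ‖cohCoeff γ n‖ ^ 2 / N :=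
      fun n => div_nonneg (by positivity) hNpos.le
    have hSB : ∑' n : ℕ, (n : ℝ) * ‖cohCoeff γ n‖ ^ 2 / N = A / N := by
      rw [tsum_congr h1, tsum_mul_left, tsum_nmul]
      have hEe : Real.exp (-A) * Real.exp A = 1 := by
        rw [← Real.exp_add]; simp
      rw [show Real.exp (-A) / N * (A * Real.exp A) = A * (Real.exp (-A) * Real.exp A) / N
        by ring, hEe, mul_one]
    calc ∑' p : ℕ × ℕ, ((p.1 + p.2 : ℕ) : ℝ) * ‖psiCoeff γ p.1 p.2‖ ^ 2
        = ∑' p : ℕ × ℕ, (((p.1 : ℝ) * ‖cohCoeff γ p.1‖ ^ 2 / N) * (if p.2 = 0 then 1 else 0) +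
            (if p.1 = 0 then 1 else 0) * ((p.2 : ℝ) * ‖cohCoeff γ p.2‖ ^ 2 / N)) :=
          tsum_congr fun p => pointwise_key γ hγ p.1 p.2
      _ = (∑' n : ℕ, (n : ℝ) * ‖cohCoeff γ n‖ ^ 2 / N) +
            ∑' n : ℕ, (n : ℝ) * ‖cohCoeff γ n‖ ^ 2 / N := tsum_cross hBsum hBnn
      _ = A / (1 - Real.exp (-A)) := by
          rw [hSB]
          have h2 : (0:ℝ) < 1 - Real.exp (-A) := by
            have h3 := hNpos
            rw [hNdef] at h3
            linarith
          rw [hNdef]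
          field_simp
          ring
  · have h1 : HasDerivAt (fun t : ℝ => Real.exp (-t)) (-1) 0 := by
      have := (Real.hasDerivAt_exp (-(0:ℝ))).comp 0 (hasDerivAt_neg (0:ℝ))
      simp at this; exact this
    have hs : HasDerivAt (fun t : ℝ => 1 - Real.exp (-t)) 1 0 := by
      have := (hasDerivAt_const (0:ℝ) (1:ℝ)).sub h1; simp at this; exact this
    have hslope' : Tendsto (fun t : ℝ => (1 - Real.exp (-t)) / t) (𝓝[≠] (0:ℝ)) (𝓝 1) := by
      refine (hasDerivAt_iff_tendsto_slope.mp hs).congr fun t => ?_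
      simp [slope_def_field]
    have hinv : Tendsto (fun t : ℝ => ((1 - Real.exp (-t)) / t)⁻¹) (𝓝[≠] (0:ℝ)) (𝓝 (1:ℝ)⁻¹) :=
      hslope'.inv₀ one_ne_zero
    have hmap : Tendsto (fun g : ℂ => (‖g‖) ^ 2) (𝓝[≠] (0:ℂ)) (𝓝[≠] (0:ℝ)) := by
      rw [tendsto_nhdsWithin_iff]
      constructor
      · have hc : Tendsto (fun g : ℂ => (‖g‖) ^ 2) (𝓝 0) (𝓝 0) := by
          have := (continuous_norm.pow 2).tendsto (0:ℂ)
          simp at this; exact this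
        exact hc.mono_left nhdsWithin_le_nhds
      · filter_upwards [self_mem_nhdsWithin] with g hg
        exact pow_ne_zero 2 (norm_ne_zero_iff.mpr hg)
    have final := (hinv.comp hmap).congr fun g : ℂ => inv_div _ _
    simpa using final
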